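/- Under the hypotheses of the previous coercivity identity, suppose additionally that S* is positive definite on Z and that B + γS is positive definite on U (i.e., B(u,u) + γS(u,u) = 0 implies u = 0). Then the only solution of 𝒜[(u,z),(v,w)] = 0 for all (v,w) ∈ U × Z is (u,z) = (0,0), and consequently for every linear functional ℓ on U × Z there is a unique (u_h,z_h) with 𝒜[(u_h,z_h),(v,w)] = ℓ(v,w) for all (v,w). -/
import Mathlib


theorem stmt6 (U Z : Type*) [AddCommGroup U] [Module ℝ U] [AddCommGroup Z] [Module ℝ Z]
    [FiniteDimensional ℝ U] [FiniteDimensional ℝ Z]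
    (B S : U →ₗ[ℝ] U →ₗ[ℝ] ℝ) (S' : Z →ₗ[ℝ] Z →ₗ[ℝ] ℝ)
    (a : U →ₗ[ℝ] Z →ₗ[ℝ] ℝ)
    (hBsymm : ∀ u v, B u v = B v u) (hBpos : ∀ u, 0 ≤ B u u)
    (hSsymm : ∀ u v, S u v = S v u) (hSpos : ∀ u, 0 ≤ S u u)
    (hS'symm : ∀ z w, S' z w = S' w z) (hS'pos : ∀ z, 0 ≤ S' z z)
    (γ γ' : ℝ) (hγ : 0 < γ) (hγ' : 0 < γ')
    (hS'def : ∀ z, S' z z = 0 → z = 0)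
    (hBSdef : ∀ u, B u u + γ * S u u = 0 → u = 0)
    (𝒜 : U × Z → U × Z → ℝ)
    (h𝒜 : ∀ u z v w, 𝒜 (u, z) (v, w) =
      B u v + γ * S u v + a v z + a u w - γ' * S' z w) :
    (∀ u z, (∀ v w, 𝒜 (u, z) (v, w) = 0) → u = 0 ∧ z = 0) ∧
    (∀ ℓ : U × Z →ₗ[ℝ] ℝ, ∃! p : U × Z, ∀ v w, 𝒜 p (v, w) = ℓ (v, w)) := by
  have key : ∀ u z, (∀ v w, 𝒜 (u, z) (v, w) = 0) → u = 0 ∧ z = 0 := by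
    intro u z h
    have h1 := h u (-z)
    rw [h𝒜] at h1
    have h1' : B u u + γ * S u u + γ' * S' z z = 0 := by
      have : a u (-z) = - a u z := by simp
      have h2 : S' z (-z) = - S' z z := by simp
      rw [this, h2] at h1; linarith
    have hBS : 0 ≤ B u u + γ * S u u :=
      add_nonneg (hBpos u) (mul_nonneg hγ.le (hSpos u))
    have hS'z : 0 ≤ γ' * S' z z := mul_nonneg hγ'.le (hS'pos z)
    have hu : B u u + γ * S u u = 0 := by linarith
    have hz : S' z z = 0 := by nlinarith
    exact ⟨hBSdef u hu, hS'def z hz⟩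
  refine ⟨key, ?_⟩
  -- build the associated linear map to the dual
  set T : U × Z →ₗ[ℝ] Module.Dual ℝ (U × Z) :=
    { toFun := fun p =>
        { toFun := fun q => B p.1 q.1 + γ * S p.1 q.1 + a q.1 p.2 + a p.1 q.2 - γ' * S' p.2 q.2
          map_add' := by intro q r; simp; ring
          map_smul' := by intro c q; simp; ring }
      map_add' := by
        intro p r; refine LinearMap.ext fun q => ?_; simp; ring
      map_smul' := by
        intro c p; refine LinearMap.ext fun q => ?_; simp; ring } with hT
  have hTA : ∀ p v w, T p (v, w) = 𝒜 p (v, w) := by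
    intro p v w
    rw [h𝒜 p.1 p.2 v w]
    rfl
  have hinj : Function.Injective T := by
    rw [← LinearMap.ker_eq_bot, Submodule.eq_bot_iff]
    intro p hp
    have hker : ∀ v w, 𝒜 (p.1, p.2) (v, w) = 0 := by
      intro v w
      rw [← hTA]
      simp only [LinearMap.mem_ker] at hp
      rw [hp]; rfl
    obtain ⟨h1, h2⟩ := key p.1 p.2 hker
    exact Prod.ext h1 h2
  have hsurj : Function.Surjective T := by
    have hfr : Module.finrank ℝ (U × Z) = Module.finrank ℝ (Module.Dual ℝ (U × Z)) :=
      (Subspace.dual_finrank_eq).symm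
    exact (LinearMap.injective_iff_surjective_of_finrank_eq_finrank hfr).mp hinj
  intro ℓ
  obtain ⟨p, hp⟩ := hsurj ℓ
  refine ⟨p, ?_, ?_⟩
  · intro v w
    rw [← hTA, hp]
  · intro q hq
    apply hinj
    rw [hp]
    refine LinearMap.ext fun q => ?_
    rw [show q = (q.1, q.2) from rfl, hTA]
    exact hq q.1 q.2
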